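/- Let q > 3 be a prime power and let P be a rooted tree poset with m elements whose shrubbery consists of the shrubs S_{m_1}, …, S_{m_s}. Then the minimum distance of the toric code C_{O_P} over 𝔽_q is d(C_{O_P}) = (q−1)^{m − Σ_{i=1}^s (m_i − 1)} · (q−2)^{Σ_{i=1}^s (m_i − 1)}; equivalently, writing b = Σ_{i=1}^s (m_i − 1) for the number of maximal elements of P, d(C_{O_P}) = (q−1)^{m−b} (q−2)^b. -/

import Mathlib

open Finset

/-- A subset `W` of `α` is an upper order ideal with respect to the order relation `le`
if it is upward closed. -/
def IsUpperIdeal {α : Type*} (le : α → α → Prop) (W : Set α) : Prop :=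
  ∀ ⦃x⦄, x ∈ W → ∀ ⦃y⦄, le x y → y ∈ W

/-- The space `L_P` of sections: the `F`-span of the monomials `∏_{i ∈ W} x_i`,
where `W` ranges over the upper order ideals of the poset `(α, le)`. -/
def monomialSpan (α : Type*) [Fintype α] (le : α → α → Prop)
    (F : Type*) [Field F] : Submodule F ((α → Fˣ) → F) :=
  Submodule.span F {g : (α → Fˣ) → F |
    ∃ W : Finset α, (∀ x ∈ W, ∀ y, le x y → y ∈ W) ∧
      g = fun x => ∏ i ∈ W, (x i : F)}

/-- The minimum distance of the toric code of the order polytope of the poset `(α, le)`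
over the finite field `F`:  `(q-1)^m - max { Z(f) : f ∈ L_P, f ≠ 0 }`. -/
noncomputable def toricMinDist (α : Type*) [Fintype α] (le : α → α → Prop)
    (F : Type*) [Field F] [Fintype F] : ℕ :=
  (Fintype.card F - 1) ^ Fintype.card α -
    sSup {n : ℕ | ∃ g ∈ monomialSpan α le F, g ≠ 0 ∧
      n = Nat.card {x : α → Fˣ // g x = 0}}


section PosetAux

variable {α : Type*} [PartialOrder α]

lemma exists_cover_of_lt [Fintype α] {a y : α} (h : a < y) : ∃ z, a ≤ z ∧ z ⋖ y := by
  classical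
  obtain ⟨z, hz, hmax⟩ : ∃ z ∈ (Finset.univ.filter fun z => a ≤ z ∧ z < y),
      ∀ x ∈ (Finset.univ.filter fun z => a ≤ z ∧ z < y), ¬ z < x := by
    obtain ⟨z, hz1, hz2⟩ := Finset.exists_maximal
      (s := (Finset.univ.filter fun z => a ≤ z ∧ z < y)) ⟨a, by simp [h]⟩
    exact ⟨z, hz1, fun x hx hlt => hlt.not_ge (hz2 hx hlt.le)⟩
  simp only [Finset.mem_filter, Finset.mem_univ, true_and] at hz hmax
  refine ⟨z, hz.1, hz.2, fun w hw hwy => ?_⟩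
  exact hmax w ⟨hz.1.trans hw.le, hwy⟩ hw

lemma le_cover_of_lt [Fintype α] (hf : ∀ y : α, ¬ IsMin y → ∃! x : α, x ⋖ y)
    {a y c : α} (h : a < y) (hc : c ⋖ y) : a ≤ c := by
  obtain ⟨z, haz, hz⟩ := exists_cover_of_lt h
  obtain ⟨x, -, huniq⟩ := hf y h.not_isMin
  have : z = c := (huniq z hz).trans (huniq c hc).symm
  exact this ▸ haz

lemma comparable_of_le [Fintype α] (hf : ∀ y : α, ¬ IsMin y → ∃! x : α, x ⋖ y) :
    ∀ y a b : α, a ≤ y → b ≤ y → a ≤ b ∨ b ≤ a := by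
  intro y
  induction y using WellFoundedLT.induction with
  | _ y IH =>
    intro a b ha hb
    rcases eq_or_lt_of_le ha with rfl | ha'
    · exact Or.inr hb
    rcases eq_or_lt_of_le hb with rfl | hb'
    · exact Or.inl ha
    obtain ⟨c, hc, -⟩ := hf y ha'.not_isMin
    exact IH c hc.lt a b (le_cover_of_lt hf ha' hc) (le_cover_of_lt hf hb' hc)

lemma forest_subtype [Fintype α] (hf : ∀ y : α, ¬ IsMin y → ∃! x : α, x ⋖ y)
    (p : α → Prop) (hup : ∀ ⦃a⦄, p a → ∀ ⦃b⦄, a ≤ b → p b) :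
    ∀ y : Subtype p, ¬ IsMin y → ∃! x : Subtype p, x ⋖ y := by
  intro y hy
  rw [not_isMin_iff] at hy
  obtain ⟨x, hx⟩ := hy
  have hxy : (x : α) < (y : α) := Subtype.coe_lt_coe.mpr hx
  obtain ⟨c, hc, -⟩ := hf (y : α) hxy.not_isMin
  have huniqcov : ∀ c' : α, c' ⋖ (y : α) → c' = c := by
    obtain ⟨d, -, hd⟩ := hf (y : α) hxy.not_isMin
    intro c' h'
    exact (hd c' h').trans (hd c hc).symm
  have hpc : p c := hup x.2 (le_cover_of_lt hf hxy hc)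
  refine ⟨⟨c, hpc⟩, ⟨Subtype.coe_lt_coe.mp hc.lt, fun w hw hwy =>
      hc.2 (Subtype.coe_lt_coe.mpr hw) (Subtype.coe_lt_coe.mpr hwy)⟩, ?_⟩
  intro c' hc'
  have h1 : (c' : α) < (y : α) := Subtype.coe_lt_coe.mpr hc'.lt
  have h2 : (c' : α) ≤ c := le_cover_of_lt hf h1 hc
  rcases eq_or_lt_of_le h2 with h | h
  · exact Subtype.ext h
  · have hlt1 : c' < (⟨c, hpc⟩ : Subtype p) := Subtype.coe_lt_coe.mp h
    have hlt2 : (⟨c, hpc⟩ : Subtype p) < y := Subtype.coe_lt_coe.mp hc.lt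
    exact absurd hlt2 (hc'.2 hlt1)

lemma isMax_subtype {p : α → Prop} (hup : ∀ ⦃a⦄, p a → ∀ ⦃b⦄, a ≤ b → p b)
    (y : Subtype p) : IsMax y ↔ IsMax (y : α) := by
  constructor
  · intro h b hb
    exact Subtype.coe_le_coe.mpr (h (show y ≤ ⟨b, hup y.2 hb⟩ from hb))
  · intro h b hb
    exact h (Subtype.coe_le_coe.mpr hb)

lemma card_isMax_subtype {p : α → Prop} (hup : ∀ ⦃a⦄, p a → ∀ ⦃b⦄, a ≤ b → p b) :
    Nat.card {z : Subtype p // IsMax z} = Nat.card {x : α // p x ∧ IsMax x} := by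
  apply Nat.card_congr
  exact ⟨fun z => ⟨z.1.1, z.1.2, (isMax_subtype hup z.1).mp z.2⟩,
    fun x => ⟨⟨x.1, x.2.1⟩, (isMax_subtype hup _).mpr x.2.2⟩,
    fun z => rfl, fun x => rfl⟩

lemma exists_isMax [Fintype α] [Nonempty α] : ∃ y : α, IsMax y := by
  obtain ⟨y, -, hy⟩ : ∃ y ∈ (univ : Finset α), ∀ b ∈ (univ : Finset α), ¬ y < b := by
    obtain ⟨y, hy1, hy2⟩ := Finset.exists_maximal (s := (univ : Finset α)) univ_nonempty
    exact ⟨y, hy1, fun b hb hlt => hlt.not_ge (hy2 hb hlt.le)⟩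
  refine ⟨y, fun b hb => ?_⟩
  rcases eq_or_lt_of_le hb with h | h
  · exact h.ge
  · exact absurd h (hy b (mem_univ b))

lemma exists_isMin [Fintype α] [Nonempty α] : ∃ y : α, IsMin y := by
  obtain ⟨y, -, hy⟩ : ∃ y ∈ (univ : Finset α), ∀ b ∈ (univ : Finset α), ¬ b < y := by
    obtain ⟨y, hy1, hy2⟩ := Finset.exists_minimal (s := (univ : Finset α)) univ_nonempty
    exact ⟨y, hy1, fun b hb hlt => hlt.not_ge (hy2 hb hlt.le)⟩
  refine ⟨y, fun b hb => ?_⟩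
  rcases eq_or_lt_of_le hb with h | h
  · exact h.ge
  · exact absurd h (hy b (mem_univ b))

end PosetAux

section CardAux

lemma nat_card_split {α : Type*} [Fintype α] (p q : α → Prop) :
    Nat.card {x : α // q x} =
      Nat.card {x : α // p x ∧ q x} + Nat.card {x : α // ¬ p x ∧ q x} := by
  classical
  simp only [Nat.card_eq_fintype_card, Fintype.card_subtype]
  rw [← Finset.card_filter_add_card_filter_not (s := univ.filter fun x => q x) p,
    Finset.filter_filter, Finset.filter_filter]
  congr 1 <;> exact congrArg Finset.card (Finset.filter_congr fun x _ => by tauto)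

lemma nat_card_split' {α : Type*} [Fintype α] (p : α → Prop) :
    Nat.card {x : α // p x} + Nat.card {x : α // ¬ p x} = Fintype.card α := by
  classical
  simp only [Nat.card_eq_fintype_card, Fintype.card_subtype]
  exact Finset.card_filter_add_card_filter_not p

lemma nat_card_prod_eq_sum {X Y : Type*} [Fintype X] [Fintype Y] (g : X × Y → Prop) :
    Nat.card {p : X × Y // g p} = ∑ y : Y, Nat.card {x : X // g (x, y)} := by
  classical
  have e : {p : X × Y // g p} ≃ Σ y : Y, {x : X // g (x, y)} :=
    ⟨fun p => ⟨p.1.2, ⟨p.1.1, p.2⟩⟩, fun s => ⟨(s.2.1, s.1), s.2.2⟩,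
      fun ⟨⟨x, y⟩, h⟩ => rfl, fun ⟨y, ⟨x, h⟩⟩ => rfl⟩
  rw [Nat.card_congr e, Nat.card_eq_fintype_card, Fintype.card_sigma]
  simp [Nat.card_eq_fintype_card]

lemma nat_card_prod_fst {X Y : Type*} (g : Y → Prop) :
    Nat.card {p : X × Y // g p.2} = Nat.card X * Nat.card {y : Y // g y} := by
  have e : {p : X × Y // g p.2} ≃ X × {y : Y // g y} :=
    ⟨fun p => (p.1.1, ⟨p.1.2, p.2⟩), fun q => ⟨(q.1, q.2.1), q.2.2⟩,
      fun ⟨⟨x, y⟩, h⟩ => rfl, fun ⟨x, ⟨y, h⟩⟩ => rfl⟩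
  rw [Nat.card_congr e, Nat.card_prod]

lemma pow_mono_helper {q A B A' B' : ℕ} (hq : 3 ≤ q)
    (h1 : A + B = A' + B') (h2 : B ≤ B') :
    (q - 1) ^ A' * (q - 2) ^ B' ≤ (q - 1) ^ A * (q - 2) ^ B := by
  obtain ⟨k, rfl⟩ := Nat.exists_eq_add_of_le h2
  have hA : A = A' + k := by omega
  subst hA
  have h21 : q - 2 ≤ q - 1 := by omega
  calc (q - 1) ^ A' * (q - 2) ^ (B + k)
      = ((q - 1) ^ A' * (q - 2) ^ B) * (q - 2) ^ k := by ring
    _ ≤ ((q - 1) ^ A' * (q - 2) ^ B) * (q - 1) ^ k :=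
        Nat.mul_le_mul_left _ (Nat.pow_le_pow_left h21 k)
    _ = (q - 1) ^ (A' + k) * (q - 2) ^ B := by ring

end CardAux

section SpanAux

variable {F : Type*} [Field F]

lemma mon_mem_span {α : Type*} [Fintype α] (le : α → α → Prop) (W : Finset α)
    (hW : ∀ x ∈ W, ∀ y, le x y → y ∈ W) :
    (fun x : α → Fˣ => ∏ i ∈ W, ((x i : F))) ∈ monomialSpan α le F :=
  Submodule.subset_span ⟨W, hW, rfl⟩

lemma prod_split {α : Type*} [Fintype α] (p : α → Prop) [DecidablePred p] (W : Finset α)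
    (w : {x // p x} → Fˣ) (z : {x // ¬ p x} → Fˣ) :
    (∏ i ∈ W, (((Equiv.piEquivPiSubtypeProd p fun _ => Fˣ).symm (w, z) i : F))) =
      (∏ j ∈ W.subtype p, ((w j : F))) * ∏ j ∈ W.subtype (fun x => ¬ p x), ((z j : F)) := by
  rw [← Finset.prod_filter_mul_prod_filter_not W p]
  congr 1
  · rw [← Finset.subtype_map p, Finset.prod_map]
    refine Finset.prod_congr rfl fun j hj => ?_
    simp [Equiv.piEquivPiSubtypeProd_symm_apply, dif_pos j.2]
  · rw [← Finset.subtype_map (fun x => ¬ p x), Finset.prod_map]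
    refine Finset.prod_congr rfl fun j hj => ?_
    simp [Equiv.piEquivPiSubtypeProd_symm_apply, dif_neg j.2]

lemma subtype_upper {α : Type*} [PartialOrder α] (p : α → Prop)
    (hup : ∀ ⦃a⦄, p a → ∀ ⦃b⦄, a ≤ b → p b) (W : Finset α)
    (hW : ∀ x ∈ W, ∀ y, x ≤ y → y ∈ W) [DecidablePred p] :
    ∀ x ∈ W.subtype p, ∀ y : Subtype p, x ≤ y → y ∈ W.subtype p := by
  intro x hx y hxy
  rw [Finset.mem_subtype] at hx ⊢
  exact hW x.1 hx y.1 (Subtype.coe_le_coe.mpr hxy)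

lemma slice_mem {α : Type*} [Fintype α] [PartialOrder α] (p : α → Prop) [DecidablePred p]
    (hupP : ∀ ⦃a⦄, p a → ∀ ⦃b⦄, a ≤ b → p b)
    (hupN : ∀ ⦃a⦄, ¬ p a → ∀ ⦃b⦄, a ≤ b → ¬ p b)
    {f : (α → Fˣ) → F} (hf : f ∈ monomialSpan α (· ≤ ·) F) :
    (∀ z : {x // ¬ p x} → Fˣ, (fun w : {x // p x} → Fˣ =>
        f ((Equiv.piEquivPiSubtypeProd p fun _ => Fˣ).symm (w, z)))
        ∈ monomialSpan {x // p x} (· ≤ ·) F)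
    ∧ (∀ w : {x // p x} → Fˣ, (fun z : {x // ¬ p x} → Fˣ =>
        f ((Equiv.piEquivPiSubtypeProd p fun _ => Fˣ).symm (w, z)))
        ∈ monomialSpan {x // ¬ p x} (· ≤ ·) F) := by
  induction hf using Submodule.span_induction with
  | mem g hg =>
    obtain ⟨W, hW, rfl⟩ := hg
    constructor
    · intro z
      have : (fun w : {x // p x} → Fˣ =>
          (∏ i ∈ W, (((Equiv.piEquivPiSubtypeProd p fun _ => Fˣ).symm (w, z) i : F)))) =
          (∏ j ∈ W.subtype (fun x => ¬ p x), ((z j : F))) •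
            fun w : {x // p x} → Fˣ => ∏ j ∈ W.subtype p, ((w j : F)) := by
        funext w
        simp only [Pi.smul_apply, smul_eq_mul, prod_split, mul_comm]
      rw [this]
      exact Submodule.smul_mem _ _ (mon_mem_span _ _ (subtype_upper p hupP W hW))
    · intro w
      have : (fun z : {x // ¬ p x} → Fˣ =>
          (∏ i ∈ W, (((Equiv.piEquivPiSubtypeProd p fun _ => Fˣ).symm (w, z) i : F)))) =
          (∏ j ∈ W.subtype p, ((w j : F))) •
            fun z : {x // ¬ p x} → Fˣ => ∏ j ∈ W.subtype (fun x => ¬ p x), ((z j : F)) := by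
        funext z
        simp only [Pi.smul_apply, smul_eq_mul, prod_split]
      rw [this]
      exact Submodule.smul_mem _ _ (mon_mem_span _ _ (subtype_upper _ hupN W hW))
  | zero =>
    constructor <;> intro _ <;>
      · have : ∀ x, (0 : (α → Fˣ) → F) x = 0 := fun _ => rfl
        simp only [this]
        exact Submodule.zero_mem _
  | add g h hg hh ihg ihh =>
    refine ⟨fun z => ?_, fun w => ?_⟩
    · have : (fun w : {x // p x} → Fˣ =>
          (g + h) ((Equiv.piEquivPiSubtypeProd p fun _ => Fˣ).symm (w, z))) =
          (fun w : {x // p x} → Fˣ =>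
            g ((Equiv.piEquivPiSubtypeProd p fun _ => Fˣ).symm (w, z))) +
          (fun w : {x // p x} → Fˣ =>
            h ((Equiv.piEquivPiSubtypeProd p fun _ => Fˣ).symm (w, z))) := rfl
      rw [this]
      exact Submodule.add_mem _ (ihg.1 z) (ihh.1 z)
    · have : (fun z : {x // ¬ p x} → Fˣ =>
          (g + h) ((Equiv.piEquivPiSubtypeProd p fun _ => Fˣ).symm (w, z))) =
          (fun z : {x // ¬ p x} → Fˣ =>
            g ((Equiv.piEquivPiSubtypeProd p fun _ => Fˣ).symm (w, z))) +
          (fun z : {x // ¬ p x} → Fˣ =>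
            h ((Equiv.piEquivPiSubtypeProd p fun _ => Fˣ).symm (w, z))) := rfl
      rw [this]
      exact Submodule.add_mem _ (ihg.2 w) (ihh.2 w)
  | smul a g hg ihg =>
    refine ⟨fun z => ?_, fun w => ?_⟩
    · have : (fun w : {x // p x} → Fˣ =>
          (a • g) ((Equiv.piEquivPiSubtypeProd p fun _ => Fˣ).symm (w, z))) =
          a • (fun w : {x // p x} → Fˣ =>
            g ((Equiv.piEquivPiSubtypeProd p fun _ => Fˣ).symm (w, z))) := rfl
      rw [this]
      exact Submodule.smul_mem _ _ (ihg.1 z)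
    · have : (fun z : {x // ¬ p x} → Fˣ =>
          (a • g) ((Equiv.piEquivPiSubtypeProd p fun _ => Fˣ).symm (w, z))) =
          a • (fun z : {x // ¬ p x} → Fˣ =>
            g ((Equiv.piEquivPiSubtypeProd p fun _ => Fˣ).symm (w, z))) := rfl
      rw [this]
      exact Submodule.smul_mem _ _ (ihg.2 w)

end SpanAux

section CountAux

lemma tensor_count {X Y : Type*} [Fintype X] [Fintype Y] {F : Type*} [Field F]
    (f : X × Y → F) (dX dY : ℕ)
    (hX : ∀ y : Y, (fun x => f (x, y)) ≠ 0 → dX ≤ Nat.card {x : X // f (x, y) ≠ 0})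
    (hY : ∀ x : X, (fun y => f (x, y)) ≠ 0 → dY ≤ Nat.card {y : Y // f (x, y) ≠ 0})
    (hf : f ≠ 0) : dX * dY ≤ Nat.card {p : X × Y // f p ≠ 0} := by
  classical
  obtain ⟨p0, hp0⟩ : ∃ p, f p ≠ 0 := by
    by_contra h; push_neg at h; exact hf (funext h)
  obtain ⟨x0, y0⟩ := p0
  set B0 : Finset Y := univ.filter fun y => f (x0, y) ≠ 0 with hB0def
  have hB0card : dY ≤ B0.card := by
    have h1 := hY x0 (fun h => hp0 (congrFun h y0))
    rwa [Nat.card_eq_fintype_card, Fintype.card_subtype] at h1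
  rw [nat_card_prod_eq_sum (fun p => f p ≠ 0)]
  calc dX * dY ≤ dX * B0.card := Nat.mul_le_mul_left dX hB0card
    _ = ∑ _y ∈ B0, dX := by rw [Finset.sum_const, smul_eq_mul, mul_comm]
    _ ≤ ∑ y ∈ B0, Nat.card {x : X // f (x, y) ≠ 0} := by
        refine Finset.sum_le_sum fun y hy => ?_
        rw [hB0def, Finset.mem_filter] at hy
        exact hX y (fun h => hy.2 (congrFun h x0))
    _ ≤ ∑ y : Y, Nat.card {x : X // f (x, y) ≠ 0} :=
        Finset.sum_le_sum_of_subset (Finset.subset_univ B0)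

end CountAux

section CaseAAux

variable {F : Type*} [Field F]

lemma restrict_span {α : Type*} [Fintype α] [PartialOrder α] [DecidableEq α] (r : α)
    {g : (α → Fˣ) → F}
    (hg : g ∈ Submodule.span F {g : (α → Fˣ) → F |
      ∃ W : Finset α, r ∉ W ∧ (∀ x ∈ W, ∀ y, x ≤ y → y ∈ W) ∧
        g = fun x => ∏ i ∈ W, (x i : F)}) :
    ∃ g' ∈ monomialSpan {x : α // x ≠ r} (· ≤ ·) F,
      ∀ (t : Fˣ) (z : {x : α // x ≠ r} → Fˣ),
        g ((Equiv.funSplitAt r Fˣ).symm (t, z)) = g' z := by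
  classical
  induction hg using Submodule.span_induction with
  | mem g hg =>
    obtain ⟨W, hrW, hW, rfl⟩ := hg
    refine ⟨fun z => ∏ j ∈ W.subtype (fun x => x ≠ r), ((z j : F)), ?_, ?_⟩
    · refine mon_mem_span _ _ ?_
      intro x hx y hxy
      rw [Finset.mem_subtype] at hx ⊢
      exact hW x.1 hx y.1 (Subtype.coe_le_coe.mpr hxy)
    · intro t z
      have hWeq : W = (W.subtype (fun x => x ≠ r)).map (Function.Embedding.subtype _) := by
        rw [Finset.subtype_map, Finset.filter_true_of_mem]
        intro i hi
        exact fun h => hrW (h ▸ hi)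
      show (∏ i ∈ W, (((Equiv.funSplitAt r Fˣ).symm (t, z) i : F))) =
        ∏ j ∈ W.subtype (fun x => x ≠ r), ((z j : F))
      conv_lhs => rw [hWeq, Finset.prod_map]
      refine Finset.prod_congr rfl fun j _hj => ?_
      simp [Equiv.funSplitAt_symm_apply, dif_neg j.2]
  | zero => exact ⟨0, Submodule.zero_mem _, fun _ _ => rfl⟩
  | add g h hg hh ihg ihh =>
    obtain ⟨g', hg', hg2⟩ := ihg
    obtain ⟨h', hh', hh2⟩ := ihh
    exact ⟨g' + h', Submodule.add_mem _ hg' hh', fun t z => by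
      simp [Pi.add_apply, hg2 t z, hh2 t z]⟩
  | smul a g hg ihg =>
    obtain ⟨g', hg', hg2⟩ := ihg
    exact ⟨a • g', Submodule.smul_mem _ _ hg', fun t z => by
      simp [Pi.smul_apply, hg2 t z]⟩

lemma phi_eval {α : Type*} [Fintype α] [DecidableEq α] (r : α) (t : Fˣ)
    (z : {x : α // x ≠ r} → Fˣ) :
    (∏ i : α, (((Equiv.funSplitAt r Fˣ).symm (t, z) i : F))) =
      (t : F) * ∏ j : {x : α // x ≠ r}, ((z j : F)) := by
  rw [← Finset.mul_prod_erase univ _ (Finset.mem_univ r)]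
  congr 1
  · simp [Equiv.funSplitAt_symm_apply]
  · have h1 : Finset.univ.erase r = Finset.filter (fun x => x ≠ r) Finset.univ := by
      ext i; simp [Finset.mem_erase, and_comm]
    rw [h1, ← Finset.subtype_map, Finset.subtype_univ, Finset.prod_map]
    refine Finset.prod_congr rfl fun j _hj => ?_
    simp [Equiv.funSplitAt_symm_apply, dif_neg j.2]

lemma span_subset_caseA {α : Type*} [Fintype α] [PartialOrder α] (r : α)
    (hall : ∀ x, r ≤ x) :
    monomialSpan α (· ≤ ·) F ≤ Submodule.span F
      (insert (fun x : α → Fˣ => ∏ i : α, ((x i : F)))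
        {g | ∃ W : Finset α, r ∉ W ∧ (∀ x ∈ W, ∀ y, x ≤ y → y ∈ W) ∧
          g = fun x => ∏ i ∈ W, ((x i : F))}) := by
  classical
  apply Submodule.span_le.mpr
  rintro g ⟨W, hW, rfl⟩
  by_cases hr : r ∈ W
  · have hWu : W = Finset.univ := Finset.eq_univ_iff_forall.mpr fun y => hW r hr y (hall y)
    exact Submodule.subset_span (Set.mem_insert_iff.mpr (Or.inl (by rw [hWu])))
  · exact Submodule.subset_span (Set.mem_insert_iff.mpr (Or.inr ⟨W, hr, hW, rfl⟩))

end CaseAAux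

section Main

lemma forest_min_nonzeros (q : ℕ) (hq : 3 < q) (F : Type) [Field F] [Fintype F]
    (hF : Fintype.card F = q) :
    ∀ (n : ℕ) (α : Type) [Fintype α] [PartialOrder α], Fintype.card α = n →
      (∀ y : α, ¬ IsMin y → ∃! x : α, x ⋖ y) →
      ∀ f ∈ monomialSpan α (· ≤ ·) F, f ≠ 0 →
        (q - 1) ^ (Fintype.card α - Nat.card {y : α // IsMax y}) *
            (q - 2) ^ (Nat.card {y : α // IsMax y})
          ≤ Nat.card {x : α → Fˣ // f x ≠ 0} := by
  intro n
  induction n using Nat.strong_induction_on with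
  | _ n IH =>
  intro α _ _ hcard hforest f hfspan hf0
  classical
  rcases isEmpty_or_nonempty α with hα | hα
  · have h1 : Fintype.card α = 0 := Fintype.card_eq_zero
    have h2 : Nat.card {y : α // IsMax y} = 0 := by
      simp [Nat.card_eq_fintype_card]
    rw [h1, h2]
    have hle : (1:ℕ) ≤ Nat.card {x : α → Fˣ // f x ≠ 0} := by
      obtain ⟨x, hx⟩ : ∃ x, f x ≠ 0 := by
        by_contra h; push_neg at h; exact hf0 (funext h)
      have : Nonempty {x : α → Fˣ // f x ≠ 0} := ⟨⟨x, hx⟩⟩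
      exact Nat.card_pos
    calc (q-1)^(0-0) * (q-2)^0 = 1 := by norm_num
      _ ≤ _ := hle
  obtain ⟨r, hrmin⟩ := exists_isMin (α := α)
  have hn1 : 1 ≤ n := by rw [← hcard]; exact Fintype.card_pos
  have hb1 : 1 ≤ Nat.card {y : α // IsMax y} := by
    obtain ⟨y, hy⟩ := exists_isMax (α := α)
    have : Nonempty {y : α // IsMax y} := ⟨⟨y, hy⟩⟩
    exact Nat.card_pos
  have hbm : Nat.card {y : α // IsMax y} ≤ n := by
    rw [Nat.card_eq_fintype_card, ← hcard]; exact Fintype.card_subtype_le _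
  by_cases hall : ∀ x : α, r ≤ x
  -- ==================== Case A : tree with root r ====================
  · have hupβ : ∀ ⦃a : α⦄, a ≠ r → ∀ ⦃b⦄, a ≤ b → b ≠ r := by
      intro a ha b hab hbr
      subst hbr
      exact ha (le_antisymm hab (hrmin hab))
    have hforestβ := forest_subtype hforest (fun x => x ≠ r) hupβ
    have hcardβ : Fintype.card {x : α // x ≠ r} = n - 1 := by
      have h := Fintype.card_subtype_compl (fun x : α => x = r)
      rw [Fintype.card_subtype_eq, hcard] at h
      exact h
    have hfmem := span_subset_caseA (F := F) r hall hfspan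
    rw [Submodule.mem_span_insert] at hfmem
    obtain ⟨a, g, hgspan, hfeq⟩ := hfmem
    obtain ⟨g', hg'span, hg'eq⟩ := restrict_span r hgspan
    have hfval : ∀ (t : Fˣ) (z : {x : α // x ≠ r} → Fˣ),
        f ((Equiv.funSplitAt r Fˣ).symm (t, z)) =
          a * ((t : F) * ∏ j : {x : α // x ≠ r}, ((z j : F))) + g' z := by
      intro t z
      rw [hfeq]
      simp only [Pi.add_apply, Pi.smul_apply, smul_eq_mul]
      rw [phi_eval, hg'eq]
    have hbβ : Nat.card {y : {x : α // x ≠ r} // IsMax y} =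
        Nat.card {x : α // x ≠ r ∧ IsMax x} := card_isMax_subtype hupβ
    have hsplitb : Nat.card {x : α // IsMax x} =
        Nat.card {x : α // x ≠ r ∧ IsMax x} + Nat.card {x : α // ¬ x ≠ r ∧ IsMax x} :=
      nat_card_split (fun x => x ≠ r) IsMax
    have hbβle : Nat.card {y : {x : α // x ≠ r} // IsMax y} ≤ n - 1 := by
      rw [Nat.card_eq_fintype_card, ← hcardβ]
      exact Fintype.card_subtype_le _
    by_cases ha : a = 0
    · -- f = g, independent of the root coordinate
      have hfg : ∀ (t : Fˣ) (z : {x : α // x ≠ r} → Fˣ),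
          f ((Equiv.funSplitAt r Fˣ).symm (t, z)) = g' z := by
        intro t z; rw [hfval]; simp [ha]
      have hg'0 : g' ≠ 0 := by
        intro h
        apply hf0
        funext x
        have h2 := hfg ((Equiv.funSplitAt r Fˣ) x).1 ((Equiv.funSplitAt r Fˣ) x).2
        rw [show (((Equiv.funSplitAt r Fˣ) x).1, ((Equiv.funSplitAt r Fˣ) x).2)
            = (Equiv.funSplitAt r Fˣ) x from rfl, Equiv.symm_apply_apply] at h2
        rw [h2, h]; rfl
      have hIH := IH (n-1) (by omega) {x : α // x ≠ r} hcardβ hforestβ g' hg'span hg'0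
      rw [hcardβ] at hIH
      have hc2 : Nat.card {x : α → Fˣ // f x ≠ 0}
          = (q - 1) * Nat.card {z : {x : α // x ≠ r} → Fˣ // g' z ≠ 0} := by
        have h3 : Nat.card {x : α → Fˣ // f x ≠ 0}
            = Nat.card (Fˣ × {z : {x : α // x ≠ r} → Fˣ // g' z ≠ 0}) := by
          apply Nat.card_congr
          refine (Equiv.subtypeEquiv (Equiv.funSplitAt r Fˣ)
            (q := fun p : Fˣ × ({x : α // x ≠ r} → Fˣ) => g' p.2 ≠ 0) fun x => ?_).trans
            ⟨fun p => (p.1.1, ⟨p.1.2, p.2⟩), fun q => ⟨(q.1, q.2.1), q.2.2⟩,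
              fun ⟨⟨x, y⟩, h⟩ => rfl, fun ⟨x, ⟨y, h⟩⟩ => rfl⟩
          have h4 := hfg ((Equiv.funSplitAt r Fˣ) x).1 ((Equiv.funSplitAt r Fˣ) x).2
          rw [show (((Equiv.funSplitAt r Fˣ) x).1, ((Equiv.funSplitAt r Fˣ) x).2)
              = (Equiv.funSplitAt r Fˣ) x from rfl, Equiv.symm_apply_apply] at h4
          rw [h4]
        rw [h3, Nat.card_prod]
        congr 1
        rw [Nat.card_eq_fintype_card, Fintype.card_units, hF]
      rw [hc2, hcard]
      calc (q - 1) ^ (n - Nat.card {y : α // IsMax y}) *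
              (q - 2) ^ (Nat.card {y : α // IsMax y})
          ≤ (q - 1) ^ (1 + ((n-1) - Nat.card {y : {x : α // x ≠ r} // IsMax y})) *
              (q - 2) ^ (Nat.card {y : {x : α // x ≠ r} // IsMax y}) := by
            apply pow_mono_helper (by omega) (by omega)
            omega
        _ = (q - 1) * ((q - 1) ^ ((n-1) - Nat.card {y : {x : α // x ≠ r} // IsMax y}) *
              (q - 2) ^ (Nat.card {y : {x : α // x ≠ r} // IsMax y})) := by
            rw [pow_add, pow_one]; ring
        _ ≤ (q - 1) * Nat.card {z : {x : α // x ≠ r} → Fˣ // g' z ≠ 0} :=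
            Nat.mul_le_mul_left _ hIH
    · -- a ≠ 0 : the root variable appears; at least q-2 nonzeros on each fiber
      have hper : ∀ z : {x : α // x ≠ r} → Fˣ,
          q - 2 ≤ Nat.card {t : Fˣ // f ((Equiv.funSplitAt r Fˣ).symm (t, z)) ≠ 0} := by
        intro z
        have hsum := nat_card_split' (fun t : Fˣ => f ((Equiv.funSplitAt r Fˣ).symm (t, z)) ≠ 0)
        have hcardU : Fintype.card Fˣ = q - 1 := by rw [Fintype.card_units, hF]
        have hP : (∏ j : {x : α // x ≠ r}, ((z j : F))) ≠ 0 := by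
          rw [Finset.prod_ne_zero_iff]
          exact fun j _ => Units.ne_zero (z j)
        have hle1 : Nat.card {t : Fˣ // ¬ f ((Equiv.funSplitAt r Fˣ).symm (t, z)) ≠ 0} ≤ 1 := by
          rw [Nat.card_eq_fintype_card]
          rw [Fintype.card_le_one_iff]
          rintro ⟨t1, h1⟩ ⟨t2, h2⟩
          rw [not_not] at h1 h2
          rw [hfval] at h1 h2
          have h5 : a * ((t1 : F) * ∏ j : {x : α // x ≠ r}, ((z j : F)))
              = a * ((t2 : F) * ∏ j : {x : α // x ≠ r}, ((z j : F))) :=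
            add_right_cancel (h1.trans h2.symm)
          have h6 := mul_left_cancel₀ ha h5
          have h7 := mul_right_cancel₀ hP h6
          exact Subtype.ext (Units.ext h7)
        rw [hcardU] at hsum
        omega
      have hcount : Nat.card {x : α → Fˣ // f x ≠ 0}
          = ∑ z : {x : α // x ≠ r} → Fˣ,
              Nat.card {t : Fˣ // f ((Equiv.funSplitAt r Fˣ).symm (t, z)) ≠ 0} := by
        rw [← nat_card_prod_eq_sum
          (fun p : Fˣ × ({x : α // x ≠ r} → Fˣ) => f ((Equiv.funSplitAt r Fˣ).symm p) ≠ 0)]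
        refine Nat.card_congr (Equiv.subtypeEquiv (Equiv.funSplitAt r Fˣ) fun x => ?_)
        rw [Equiv.symm_apply_apply]
      rw [hcount, hcard]
      have hcardfun : Fintype.card ({x : α // x ≠ r} → Fˣ) = (q-1)^(n-1) := by
        rw [Fintype.card_fun, Fintype.card_units, hF, hcardβ]
      calc (q - 1) ^ (n - Nat.card {y : α // IsMax y}) *
              (q - 2) ^ (Nat.card {y : α // IsMax y})
          ≤ (q - 1) ^ (n - 1) * (q - 2) ^ 1 := by
            apply pow_mono_helper (by omega) (by omega) hb1
        _ = ∑ _z : {x : α // x ≠ r} → Fˣ, (q - 2) := by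
            rw [Finset.sum_const, Finset.card_univ, hcardfun, smul_eq_mul, pow_one, mul_comm]
        _ ≤ ∑ z : {x : α // x ≠ r} → Fˣ,
              Nat.card {t : Fˣ // f ((Equiv.funSplitAt r Fˣ).symm (t, z)) ≠ 0} :=
            Finset.sum_le_sum fun z _ => hper z
  -- ==================== Case B : split off the tree of r ====================
  · push_neg at hall
    obtain ⟨w0, hw0⟩ := hall
    have hupP : ∀ ⦃a : α⦄, r ≤ a → ∀ ⦃b⦄, a ≤ b → r ≤ b := fun a ha b hab => ha.trans hab
    have hupN : ∀ ⦃a : α⦄, ¬ r ≤ a → ∀ ⦃b⦄, a ≤ b → ¬ r ≤ b := by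
      intro a ha b hab hrb
      rcases comparable_of_le hforest b r a hrb hab with h | h
      · exact ha h
      · exact ha (hrmin h)
    have hforestX := forest_subtype hforest (fun x => r ≤ x) hupP
    have hforestY := forest_subtype hforest (fun x => ¬ r ≤ x) hupN
    have hcardsum : Fintype.card {x : α // r ≤ x} + Fintype.card {x : α // ¬ r ≤ x} = n := by
      rw [← hcard, ← Fintype.card_sum]
      exact Fintype.card_congr (Equiv.sumCompl _)
    have hX1 : 1 ≤ Fintype.card {x : α // r ≤ x} :=
      Fintype.card_pos_iff.mpr ⟨⟨r, le_refl r⟩⟩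
    have hY1 : 1 ≤ Fintype.card {x : α // ¬ r ≤ x} :=
      Fintype.card_pos_iff.mpr ⟨⟨w0, hw0⟩⟩
    have hbX : Nat.card {y : {x : α // r ≤ x} // IsMax y} =
        Nat.card {x : α // r ≤ x ∧ IsMax x} := card_isMax_subtype hupP
    have hbY : Nat.card {y : {x : α // ¬ r ≤ x} // IsMax y} =
        Nat.card {x : α // ¬ r ≤ x ∧ IsMax x} := card_isMax_subtype hupN
    have hsplitb : Nat.card {x : α // IsMax x} =
        Nat.card {x : α // r ≤ x ∧ IsMax x} + Nat.card {x : α // ¬ r ≤ x ∧ IsMax x} :=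
      nat_card_split (fun x => r ≤ x) IsMax
    have hbXle : Nat.card {y : {x : α // r ≤ x} // IsMax y} ≤ Fintype.card {x : α // r ≤ x} := by
      rw [Nat.card_eq_fintype_card]; exact Fintype.card_subtype_le _
    have hbYle : Nat.card {y : {x : α // ¬ r ≤ x} // IsMax y} ≤ Fintype.card {x : α // ¬ r ≤ x} := by
      rw [Nat.card_eq_fintype_card]; exact Fintype.card_subtype_le _
    have hslices := slice_mem (F := F) (fun x => r ≤ x) hupP hupN hfspan
    have hf'0 : (fun pr : ({x : α // r ≤ x} → Fˣ) × ({x : α // ¬ r ≤ x} → Fˣ) =>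
        f ((Equiv.piEquivPiSubtypeProd (fun x => r ≤ x) (fun _ => Fˣ)).symm pr)) ≠ 0 := by
      intro h
      apply hf0
      funext x
      have h2 := congrFun h ((Equiv.piEquivPiSubtypeProd (fun x => r ≤ x) (fun _ => Fˣ)) x)
      rwa [Equiv.symm_apply_apply] at h2
    have htensor := tensor_count
      (fun pr : ({x : α // r ≤ x} → Fˣ) × ({x : α // ¬ r ≤ x} → Fˣ) =>
        f ((Equiv.piEquivPiSubtypeProd (fun x => r ≤ x) (fun _ => Fˣ)).symm pr))
      ((q - 1) ^ (Fintype.card {x : α // r ≤ x} - Nat.card {y : {x : α // r ≤ x} // IsMax y}) *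
        (q - 2) ^ (Nat.card {y : {x : α // r ≤ x} // IsMax y}))
      ((q - 1) ^ (Fintype.card {x : α // ¬ r ≤ x} - Nat.card {y : {x : α // ¬ r ≤ x} // IsMax y}) *
        (q - 2) ^ (Nat.card {y : {x : α // ¬ r ≤ x} // IsMax y}))
      (fun z hz => IH (Fintype.card {x : α // r ≤ x}) (by omega) {x : α // r ≤ x} rfl
        hforestX _ (hslices.1 z) hz)
      (fun w hw => IH (Fintype.card {x : α // ¬ r ≤ x}) (by omega) {x : α // ¬ r ≤ x} rfl
        hforestY _ (hslices.2 w) hw)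
      hf'0
    have hcc : Nat.card {p : ({x : α // r ≤ x} → Fˣ) × ({x : α // ¬ r ≤ x} → Fˣ) //
        f ((Equiv.piEquivPiSubtypeProd (fun x => r ≤ x) (fun _ => Fˣ)).symm p) ≠ 0}
        = Nat.card {x : α → Fˣ // f x ≠ 0} := by
      refine (Nat.card_congr (Equiv.subtypeEquiv
        (Equiv.piEquivPiSubtypeProd (fun x => r ≤ x) (fun _ => Fˣ)) fun x => ?_)).symm
      rw [Equiv.symm_apply_apply]
    rw [hcc] at htensor
    refine le_trans ?_ htensor
    rw [hcard]
    have e1 : n - Nat.card {y : α // IsMax y} =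
        (Fintype.card {x : α // r ≤ x} - Nat.card {y : {x : α // r ≤ x} // IsMax y}) +
        (Fintype.card {x : α // ¬ r ≤ x} - Nat.card {y : {x : α // ¬ r ≤ x} // IsMax y}) := by
      omega
    have e2 : Nat.card {y : α // IsMax y} =
        Nat.card {y : {x : α // r ≤ x} // IsMax y} +
        Nat.card {y : {x : α // ¬ r ≤ x} // IsMax y} := by
      omega
    rw [e1, e2, pow_add, pow_add]
    ring_nf
    apply le_of_eq
    ring

end Main

section Construct

lemma construct_min (q : ℕ) (hq : 3 < q) (F : Type) [Field F] [Fintype F]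
    (hF : Fintype.card F = q) (α : Type) [Fintype α] [PartialOrder α] :
    ∃ f ∈ monomialSpan α (· ≤ ·) F, f ≠ 0 ∧
      Nat.card {x : α → Fˣ // f x ≠ 0} =
        (q - 1) ^ (Fintype.card α - Nat.card {y : α // IsMax y}) *
          (q - 2) ^ (Nat.card {y : α // IsMax y}) := by
  classical
  obtain ⟨M, hM⟩ : ∃ M : Finset α, M = univ.filter (fun y => IsMax y) := ⟨_, rfl⟩
  have hMcard : M.card = Nat.card {y : α // IsMax y} := by
    rw [hM, Nat.card_eq_fintype_card, Fintype.card_subtype]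
  refine ⟨fun x => ∏ y ∈ M, ((x y : F) - 1), ?_, ?_, ?_⟩
  · have hexp : (fun x : α → Fˣ => ∏ y ∈ M, ((x y : F) - 1)) =
        ∑ S ∈ M.powerset, ((-1 : F) ^ ((M \ S).card)) •
          (fun x : α → Fˣ => ∏ y ∈ S, ((x y : F))) := by
      funext x
      rw [Finset.sum_apply]
      have h1 : ∀ y ∈ M, ((x y : F) - 1) = (x y : F) + (-1) := by intro y _; ring
      rw [Finset.prod_congr rfl h1, Finset.prod_add]
      refine Finset.sum_congr rfl fun S hS => ?_
      simp only [Pi.smul_apply, smul_eq_mul, Finset.prod_const]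
      ring
    rw [hexp]
    refine Submodule.sum_mem _ fun S hS => Submodule.smul_mem _ _ (mon_mem_span _ _ ?_)
    intro y hy z hyz
    rw [Finset.mem_powerset] at hS
    have hymax : IsMax y := (Finset.mem_filter.mp (hM ▸ hS hy)).2
    have hzy : z = y := le_antisymm (hymax hyz) hyz
    rwa [hzy]
  · obtain ⟨u, hu⟩ : ∃ u : Fˣ, u ≠ 1 := by
      apply Fintype.exists_ne_of_one_lt_card
      rw [Fintype.card_units, hF]; omega
    intro h
    have h2 := congrFun h (fun _ => u)
    simp only [Pi.zero_apply] at h2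
    rw [Finset.prod_const] at h2
    have hne : ((u : F) - 1) ≠ 0 := sub_ne_zero.mpr (fun hh => hu (Units.ext (by simpa using hh)))
    exact pow_ne_zero _ hne h2
  · have hfx : ∀ x : α → Fˣ, ((∏ y ∈ M, ((x y : F) - 1)) ≠ 0 ↔
        ∀ i, x i ∈ (if i ∈ M then univ.filter (fun u : Fˣ => (u : F) ≠ 1) else univ)) := by
      intro x
      rw [Finset.prod_ne_zero_iff]
      constructor
      · intro h i
        by_cases hi : i ∈ M
        · rw [if_pos hi]
          simp only [Finset.mem_filter, Finset.mem_univ, true_and]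
          exact fun h1 => (h i hi) (by rw [h1]; ring)
        · rw [if_neg hi]; exact Finset.mem_univ _
      · intro h y hy
        have h2 := h y
        rw [if_pos hy] at h2
        simp only [Finset.mem_filter, Finset.mem_univ, true_and] at h2
        exact sub_ne_zero.mpr h2
    have hcount : Nat.card {x : α → Fˣ // (∏ y ∈ M, ((x y : F) - 1)) ≠ 0}
        = (Fintype.piFinset (fun i : α =>
            if i ∈ M then univ.filter (fun u : Fˣ => (u : F) ≠ 1) else univ)).card := by
      rw [Nat.card_eq_fintype_card, Fintype.card_subtype]
      congr 1
      ext x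
      simp only [Finset.mem_filter, Finset.mem_univ, true_and, Fintype.mem_piFinset]
      exact hfx x
    have hunitcard : (univ.filter (fun u : Fˣ => (u : F) ≠ 1)).card = q - 2 := by
      have h1 : (univ.filter (fun u : Fˣ => (u : F) = 1)).card +
          (univ.filter (fun u : Fˣ => ¬ (u : F) = 1)).card = Fintype.card Fˣ := by
        rw [← Finset.card_univ]
        exact Finset.card_filter_add_card_filter_not _
      have h2 : (univ.filter (fun u : Fˣ => (u : F) = 1)) = {1} := by
        ext u; simp [Units.val_eq_one]
      rw [h2, Finset.card_singleton, Fintype.card_units, hF] at h1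
      have h3 : (univ.filter (fun u : Fˣ => (u : F) ≠ 1)) =
          (univ.filter (fun u : Fˣ => ¬ (u : F) = 1)) := rfl
      rw [h3]
      clear hfx hcount hMcard hM
      omega
    have hcards : ∀ i : α,
        (if i ∈ M then univ.filter (fun u : Fˣ => (u : F) ≠ 1) else univ).card
          = if i ∈ M then q - 2 else q - 1 := by
      intro i
      by_cases hi : i ∈ M
      · rw [if_pos hi, if_pos hi, hunitcard]
      · rw [if_neg hi, if_neg hi, Finset.card_univ, Fintype.card_units, hF]
    rw [hcount, Fintype.card_piFinset]
    rw [Finset.prod_congr rfl (fun i _ => hcards i)]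
    rw [← Finset.prod_filter_mul_prod_filter_not univ (· ∈ M)]
    rw [Finset.prod_congr rfl (fun i hi => if_pos (Finset.mem_filter.mp hi).2),
      Finset.prod_congr rfl (fun i hi => if_neg (Finset.mem_filter.mp hi).2)]
    rw [Finset.prod_const, Finset.prod_const]
    have hfil : (univ.filter (fun i : α => i ∈ M)) = M := by
      ext i; simp [hM]
    have hfilcard : (univ.filter (fun i : α => ¬ i ∈ M)).card =
        Fintype.card α - M.card := by
      have h4 := Finset.card_filter_add_card_filter_not
        (s := (univ : Finset α)) (fun i : α => i ∈ M)
      rw [hfil, Finset.card_univ] at h4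
      clear hfx hcount hMcard hM hcards hunitcard hfil
      omega
    rw [hfil, hfilcard, hMcard, mul_comm]

end Construct

/-- Let `q > 3` be a prime power (realized as the cardinality of a finite
field `F`) and let `P` be a rooted tree poset with `m` elements (a finite poset with a least
element `root` such that every other element covers a unique element).  Writing `b` for the
number of maximal elements of `P` (which equals `Σ (m_i - 1)` over the shrubbery
`S_{m_1}, …, S_{m_s}` of `P`), the minimum distance of the toric code of the order polytope
of `P` is `(q-1)^(m-b) * (q-2)^b`. -/
theorem stmt0 (q m : ℕ) (hq : 3 < q)
    (F : Type) [Field F] [Fintype F] (hF : Fintype.card F = q)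
    (α : Type) [Fintype α] [PartialOrder α] (hm : Fintype.card α = m)
    (root : α) (hroot : ∀ x : α, root ≤ x)
    (htree : ∀ y : α, y ≠ root → ∃! x : α, x ⋖ y)
    (b : ℕ) (hb : b = Nat.card {y : α // IsMax y}) :
    toricMinDist α (· ≤ ·) F = (q - 1) ^ (m - b) * (q - 2) ^ b := by
  classical
  subst hF hm hb
  have hforest : ∀ y : α, ¬ IsMin y → ∃! x : α, x ⋖ y := by
    intro y hy
    refine htree y fun h => hy ?_
    subst h
    exact fun c _ => hroot c
  have hlow := forest_min_nonzeros (Fintype.card F) hq F rfl (Fintype.card α) α rfl hforest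
  obtain ⟨f0, hf0span, hf0ne, hf0count⟩ := construct_min (Fintype.card F) hq F rfl α
  have hble : Nat.card {y : α // IsMax y} ≤ Fintype.card α := by
    rw [Nat.card_eq_fintype_card]; exact Fintype.card_subtype_le _
  have hDle : (Fintype.card F - 1) ^ (Fintype.card α - Nat.card {y : α // IsMax y}) *
      (Fintype.card F - 2) ^ (Nat.card {y : α // IsMax y})
      ≤ (Fintype.card F - 1) ^ (Fintype.card α) := by
    calc (Fintype.card F - 1) ^ (Fintype.card α - Nat.card {y : α // IsMax y}) *
        (Fintype.card F - 2) ^ (Nat.card {y : α // IsMax y})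
        ≤ (Fintype.card F - 1) ^ (Fintype.card α - Nat.card {y : α // IsMax y}) *
          (Fintype.card F - 1) ^ (Nat.card {y : α // IsMax y}) :=
          Nat.mul_le_mul_left _ (Nat.pow_le_pow_left (by omega) _)
      _ = (Fintype.card F - 1) ^ (Fintype.card α) := by
          rw [← pow_add]
          congr 1
          omega
  have htot : ∀ g : (α → Fˣ) → F,
      Nat.card {x : α → Fˣ // g x = 0} + Nat.card {x : α → Fˣ // g x ≠ 0}
        = (Fintype.card F - 1) ^ (Fintype.card α) := by
    intro g
    have h1 := nat_card_split' (fun x : α → Fˣ => g x ≠ 0)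
    have h2 : Nat.card {x : α → Fˣ // ¬ g x ≠ 0} = Nat.card {x : α → Fˣ // g x = 0} :=
      Nat.card_congr (Equiv.subtypeEquivRight fun x => not_not)
    rw [h2] at h1
    have h3 : Fintype.card (α → Fˣ) = (Fintype.card F - 1) ^ (Fintype.card α) := by
      rw [Fintype.card_fun, Fintype.card_units]
    exact (Nat.add_comm _ _).trans (h1.trans h3)
  have hub : ∀ n ∈ {n : ℕ | ∃ g ∈ monomialSpan α (· ≤ ·) F, g ≠ 0 ∧
      n = Nat.card {x : α → Fˣ // g x = 0}},
      n ≤ (Fintype.card F - 1) ^ (Fintype.card α) -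
        (Fintype.card F - 1) ^ (Fintype.card α - Nat.card {y : α // IsMax y}) *
          (Fintype.card F - 2) ^ (Nat.card {y : α // IsMax y}) := by
    rintro n ⟨g, hg, hgne, rfl⟩
    have h5 := hlow g hg hgne
    have h6 := htot g
    omega
  have hmem : ((Fintype.card F - 1) ^ (Fintype.card α) -
      (Fintype.card F - 1) ^ (Fintype.card α - Nat.card {y : α // IsMax y}) *
        (Fintype.card F - 2) ^ (Nat.card {y : α // IsMax y}))
      ∈ {n : ℕ | ∃ g ∈ monomialSpan α (· ≤ ·) F, g ≠ 0 ∧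
        n = Nat.card {x : α → Fˣ // g x = 0}} := by
    refine ⟨f0, hf0span, hf0ne, ?_⟩
    have h6 := htot f0
    omega
  have hsup : sSup {n : ℕ | ∃ g ∈ monomialSpan α (· ≤ ·) F, g ≠ 0 ∧
      n = Nat.card {x : α → Fˣ // g x = 0}} =
      (Fintype.card F - 1) ^ (Fintype.card α) -
        (Fintype.card F - 1) ^ (Fintype.card α - Nat.card {y : α // IsMax y}) *
          (Fintype.card F - 2) ^ (Nat.card {y : α // IsMax y}) :=
    le_antisymm (csSup_le ⟨_, hmem⟩ hub) (le_csSup ⟨_, hub⟩ hmem)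
  show (Fintype.card F - 1) ^ Fintype.card α - sSup {n : ℕ | ∃ g ∈ monomialSpan α (· ≤ ·) F,
      g ≠ 0 ∧ n = Nat.card {x : α → Fˣ // g x = 0}} = _
  rw [hsup]
  exact Nat.sub_sub_self hDle
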